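/- Let a : ℕ → ℚ satisfy a(0)=1, a(1)=-1, a(2)=A with A ≤ 0, and a(n) = -(1/2)·∑_{k=0}^{n-1} a(k)·C(n,k)·2^{n-k} for n ≥ 3. Define c(j,d) = ∑_{k=j}^{d} 2^{-k}·C(d-j, d-k)·a(k). Then for all d ≥ 2 and all 0 ≤ j ≤ d, c(j,d) = (-1)^d · c(d-j, d). -/

import Mathlib

private def Sfun (b : ℕ → ℚ) (j m : ℕ) : ℚ :=
  ∑ t ∈ Finset.range (m+1), (m.choose t : ℚ) * b (j+t)

private lemma Sfun_zero (b : ℕ → ℚ) (j : ℕ) : Sfun b j 0 = b j := by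
  simp [Sfun]

private lemma Sfun_pascal (b : ℕ → ℚ) (j m : ℕ) :
    Sfun b j (m+1) = Sfun b j m + Sfun b (j+1) m := by
  have h1 : Sfun b j (m+1)
      = (∑ t ∈ Finset.range (m+1), ((m+1).choose (t+1) : ℚ) * b (j+(t+1)))
        + ((m+1).choose 0 : ℚ) * b (j+0) := by
    rw [Sfun, Finset.sum_range_succ']
  have h3 : (∑ t ∈ Finset.range (m+1), ((m+1).choose (t+1) : ℚ) * b (j+(t+1)))
      = (∑ t ∈ Finset.range (m+1), (m.choose t : ℚ) * b ((j+1)+t))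
        + ∑ t ∈ Finset.range (m+1), (m.choose (t+1) : ℚ) * b (j+(t+1)) := by
    rw [← Finset.sum_add_distrib]
    apply Finset.sum_congr rfl
    intro t _
    rw [Nat.choose_succ_succ]
    push_cast
    rw [show (j+1)+t = j+(t+1) from by omega]
    ring
  have h4 : (∑ t ∈ Finset.range (m+1), (m.choose (t+1) : ℚ) * b (j+(t+1)))
      + ((m+1).choose 0 : ℚ) * b (j+0) = Sfun b j m := by
    have h5 : (∑ t ∈ Finset.range (m+2), (m.choose t : ℚ) * b (j+t))
        = (∑ t ∈ Finset.range (m+1), (m.choose (t+1) : ℚ) * b (j+(t+1)))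
          + (m.choose 0 : ℚ) * b (j+0) := Finset.sum_range_succ' _ _
    have h6 : (∑ t ∈ Finset.range (m+2), (m.choose t : ℚ) * b (j+t))
        = Sfun b j m + (m.choose (m+1) : ℚ) * b (j+(m+1)) := by
      rw [Sfun, Finset.sum_range_succ]
    rw [Nat.choose_zero_right] at h5 ⊢
    rw [Nat.choose_succ_self] at h6
    push_cast at h6
    rw [← h5, h6]
    ring
  rw [h1, h3]
  rw [add_assoc, h4]
  have h7 : (∑ t ∈ Finset.range (m+1), (m.choose t : ℚ) * b ((j+1)+t)) = Sfun b (j+1) m := rfl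
  rw [h7, add_comm]

private def Ffun (b : ℕ → ℚ) (j m : ℕ) : ℚ :=
  Sfun b j m - (-1)^(j+m) * Sfun b m j

private lemma Ffun_antisym (b : ℕ → ℚ) (j m : ℕ) :
    Ffun b m j = -((-1 : ℚ)^(j+m) * Ffun b j m) := by
  unfold Ffun
  rw [show m + j = j + m from by omega]
  set e : ℚ := (-1)^(j+m) with hee
  have he : e * e = 1 := by
    rw [hee, ← pow_add]
    exact Even.neg_one_pow ⟨j+m, rfl⟩
  linear_combination (-(Sfun b m j)) * he

private lemma Ffun_pascal (b : ℕ → ℚ) (j m : ℕ) :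
    Ffun b j (m+1) = Ffun b j m + Ffun b (j+1) m := by
  unfold Ffun
  rw [Sfun_pascal b j m]
  have e3 : Sfun b (m+1) j = Sfun b m (j+1) - Sfun b m j := by
    have := Sfun_pascal b m j; linarith
  have e1 : ((-1:ℚ))^(j+(m+1)) = -(-1)^(j+m) := by
    rw [show j+(m+1) = (j+m)+1 from by omega, pow_succ]; ring
  have e2 : ((-1:ℚ))^((j+1)+m) = -(-1)^(j+m) := by
    rw [show (j+1)+m = (j+m)+1 from by omega, pow_succ]; ring
  rw [e3, e1, e2]
  ring

private lemma mainLemma (b : ℕ → ℚ) (hb2 : Ffun b 0 2 = 0)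
    (hodd : ∀ n, 3 ≤ n → Odd n → Ffun b 0 n = 0) :
    ∀ n, 2 ≤ n → ∀ j m, j + m = n → Ffun b j m = 0 := by
  intro n hn
  induction n, hn using Nat.le_induction with
  | base =>
    intro j m hjm
    have hcases : j = 0 ∧ m = 2 ∨ j = 1 ∧ m = 1 ∨ j = 2 ∧ m = 0 := by omega
    rcases hcases with ⟨rfl, rfl⟩ | ⟨rfl, rfl⟩ | ⟨rfl, rfl⟩
    · exact hb2
    · unfold Ffun; norm_num
    · rw [Ffun_antisym b 0 2, hb2]; ring
  | succ n hn IH =>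
    have key : ∀ t, t ≤ n + 1 → Ffun b t (n + 1 - t) = Ffun b 0 (n + 1) := by
      intro t
      induction t with
      | zero => intro _; simp
      | succ t ih =>
        intro ht
        have ht' : t ≤ n := by omega
        have e1 : n + 1 - t = (n - t) + 1 := by omega
        have e2 : n + 1 - (t + 1) = n - t := by omega
        have hprev : Ffun b t ((n - t) + 1) = Ffun b 0 (n+1) := by
          rw [← e1]; exact ih (by omega)
        have h0 : Ffun b t (n - t) = 0 := IH t (n - t) (by omega)
        have hp := Ffun_pascal b t (n - t)
        rw [e2]
        linarith
    have hz : Ffun b 0 (n+1) = 0 := by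
      rcases Nat.even_or_odd (n+1) with he | ho
      · have hk := key (n+1) le_rfl
        rw [show n + 1 - (n+1) = 0 from by omega] at hk
        have h2 := Ffun_antisym b 0 (n+1)
        rw [zero_add, he.neg_one_pow, one_mul] at h2
        linarith
      · exact hodd (n+1) (by omega) ho
    intro j m hjm
    have hkey := key j (by omega)
    rw [show n + 1 - j = m from by omega] at hkey
    rw [hkey, hz]

theorem stmt_2 (A : ℚ) (hA : A ≤ 0) (a : ℕ → ℚ)
    (h0 : a 0 = 1) (h1 : a 1 = -1) (h2 : a 2 = A)
    (hrec : ∀ n, 3 ≤ n →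
      2 * a n = -∑ k ∈ Finset.range n, a k * (n.choose k : ℚ) * 2 ^ (n - k))
    (c : ℕ → ℕ → ℚ)
    (hc : ∀ j d, c j d = ∑ k ∈ Finset.Icc j d,
      ((d - j).choose (d - k) : ℚ) * a k / 2 ^ k) :
    ∀ d, 2 ≤ d → ∀ j, j ≤ d → c j d = (-1) ^ d * c (d - j) d := by
  intro d hd j hj
  set b : ℕ → ℚ := fun k => a k / 2^k with hb
  have hbval : ∀ k, b k = a k / 2^k := fun k => by rw [hb]
  have hb2 : Ffun b 0 2 = 0 := by
    unfold Ffun Sfun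
    simp [Finset.sum_range_succ, hbval, h0, h1]
    norm_num
  have hS0 : ∀ n, 3 ≤ n → Sfun b 0 n = - b n := by
    intro n hn
    have hne : (2:ℚ)^n ≠ 0 := by positivity
    have key : (2:ℚ)^n * Sfun b 0 n
        = ∑ t ∈ Finset.range (n+1), a t * (n.choose t : ℚ) * 2^(n-t) := by
      rw [Sfun, Finset.mul_sum]
      apply Finset.sum_congr rfl
      intro t ht
      have ht' : t ≤ n := by simpa [Nat.lt_succ_iff] using ht
      have h2' : (2:ℚ)^n = 2^(n-t) * 2^t := by rw [← pow_add]; congr 1; omega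
      have h2t : (2:ℚ)^t ≠ 0 := by positivity
      rw [zero_add, hbval t, h2']
      field_simp
    rw [Finset.sum_range_succ] at key
    rw [show ∑ t ∈ Finset.range n, a t * (n.choose t:ℚ) * 2^(n-t) = -(2 * a n)
      from by rw [hrec n hn]; ring] at key
    rw [Nat.sub_self, Nat.choose_self] at key
    push_cast at key
    have key2 : (2:ℚ)^n * Sfun b 0 n = - a n := by rw [key]; ring
    rw [hbval n]
    field_simp
    linarith
  have hodd : ∀ n, 3 ≤ n → Odd n → Ffun b 0 n = 0 := by
    intro n hn ho
    unfold Ffun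
    rw [hS0 n hn, Sfun_zero, zero_add, ho.neg_one_pow]
    ring
  have hcS : ∀ j', j' ≤ d → c j' d = Sfun b j' (d - j') := by
    intro j' hj'
    rw [hc, Sfun]
    rw [show Finset.Icc j' d = Finset.Ico j' (d+1) from (Finset.Ico_add_one_right_eq_Icc j' d).symm]
    rw [Finset.sum_Ico_eq_sum_range]
    rw [show d + 1 - j' = (d - j') + 1 from by omega]
    apply Finset.sum_congr rfl
    intro t ht
    have ht' : t ≤ d - j' := by simpa [Nat.lt_succ_iff] using ht
    rw [show d - (j' + t) = (d - j') - t from by omega]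
    rw [Nat.choose_symm ht']
    rw [hbval (j' + t), mul_div_assoc]
  have hF := mainLemma b hb2 hodd d hd j (d - j) (by omega)
  rw [hcS j hj, hcS (d-j) (by omega)]
  rw [show d - (d - j) = j from by omega]
  unfold Ffun at hF
  rw [show j + (d - j) = d from by omega] at hF
  linarith
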